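/- Suppose q > μ and fix ε ∈ ℝ. The function H : (0, k*) → ℝ defined by H(s) := ε + ∫₀^s q·W(η)/(q·W(η) − Z(η)) dη is well defined, continuously differentiable and strictly decreasing on (0, k*), satisfies lim_{s↓0} H(s) = ε and lim_{s↑k*} H(s) = −∞, and hence is a bijection from (0, k*) onto (−∞, ε). -/

import Mathlib

open Real Filter Set MeasureTheory

noncomputable def dlt (σ μ q : ℝ) : ℝ := Real.sqrt ((μ / σ ^ 2 - 1 / 2) ^ 2 + 2 * q / σ ^ 2)

noncomputable def gma (σ μ : ℝ) : ℝ := 1 / 2 - μ / σ ^ 2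

noncomputable def gma1 (σ μ q : ℝ) : ℝ := gma σ μ - dlt σ μ q

noncomputable def gma2 (σ μ q : ℝ) : ℝ := gma σ μ + dlt σ μ q

/-- The scale function `W^{(q)}` of `X_t = (μ - σ²/2) t + σ B_t`. -/
noncomputable def W (σ μ q : ℝ) (x : ℝ) : ℝ :=
  if 0 ≤ x then 2 / (σ ^ 2 * dlt σ μ q) * Real.exp (gma σ μ * x) * Real.sinh (dlt σ μ q * x)
  else 0

/-- The scale function `Z^{(q)}` of `X_t = (μ - σ²/2) t + σ B_t`. -/
noncomputable def Z (σ μ q : ℝ) (x : ℝ) : ℝ :=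
  if 0 ≤ x then
    Real.exp (gma σ μ * x) * Real.cosh (dlt σ μ q * x)
      - gma σ μ / dlt σ μ q * Real.exp (gma σ μ * x) * Real.sinh (dlt σ μ q * x)
  else 1

/-- `k* = (γ₂ - γ₁)⁻¹ log((1 - 1/γ₁)/(1 - 1/γ₂))`. -/
noncomputable def kstar (σ μ q : ℝ) : ℝ :=
  (gma2 σ μ q - gma1 σ μ q)⁻¹ *
    Real.log ((1 - 1 / gma1 σ μ q) / (1 - 1 / gma2 σ μ q))

/-- The function `H(s) = ε + ∫₀ˢ q W(η) / (q W(η) - Z(η)) dη`. -/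
noncomputable def Hfun (σ μ q ε : ℝ) (s : ℝ) : ℝ :=
  ε + ∫ η in (0 : ℝ)..s, q * W σ μ q η / (q * W σ μ q η - Z σ μ q η)

lemma dlt_pos (σ μ q : ℝ) (hσ : 0 < σ) (hq : 0 < q) : 0 < dlt σ μ q :=
  Real.sqrt_pos.mpr (by positivity)

lemma dlt_sq (σ μ q : ℝ) (hσ : 0 < σ) (hq : 0 < q) :
    dlt σ μ q ^ 2 = gma σ μ ^ 2 + 2 * q / σ ^ 2 := by
  have h := Real.sq_sqrt (show (0:ℝ) ≤ (μ / σ ^ 2 - 1 / 2) ^ 2 + 2 * q / σ ^ 2 by positivity)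
  rw [dlt, h, gma]; ring

lemma gma2_gt_one (σ μ q : ℝ) (hσ : 0 < σ) (hq : 0 < q) (hqμ : μ < q) :
    1 < gma2 σ μ q := by
  have hδ := dlt_pos σ μ q hσ hq
  have h2 := dlt_sq σ μ q hσ hq
  have hσ2 : (0:ℝ) < σ ^ 2 := by positivity
  rw [gma2]; rw [gma] at h2 ⊢
  by_contra h
  push_neg at h
  have hd : dlt σ μ q ≤ 1/2 + μ / σ ^ 2 := by linarith
  have key : 0 ≤ (1/2 + μ / σ ^ 2) ^ 2 - dlt σ μ q ^ 2 := by
    nlinarith [mul_nonneg (show (0:ℝ) ≤ 1/2 + μ / σ ^ 2 - dlt σ μ q by linarith)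
      (show (0:ℝ) ≤ 1/2 + μ / σ ^ 2 + dlt σ μ q by linarith)]
  have hqσ : 2 * μ / σ ^ 2 < 2 * q / σ ^ 2 := by
    apply div_lt_div_of_pos_right (by linarith) hσ2
  ring_nf at key h2 hqσ
  linarith

lemma gma1_neg (σ μ q : ℝ) (hσ : 0 < σ) (hq : 0 < q) : gma1 σ μ q < 0 := by
  have hδ := dlt_pos σ μ q hσ hq
  have h2 := dlt_sq σ μ q hσ hq
  have hσ2 : (0:ℝ) < σ ^ 2 := by positivity
  have hq2 : 0 < 2 * q / σ ^ 2 := by positivity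
  rw [gma1]
  nlinarith [hδ, sq_nonneg (gma σ μ + dlt σ μ q)]

lemma gma2_pos (σ μ q : ℝ) (hσ : 0 < σ) (hq : 0 < q) (hqμ : μ < q) : 0 < gma2 σ μ q :=
  lt_trans one_pos (gma2_gt_one σ μ q hσ hq hqμ)

noncomputable def cA (σ μ q : ℝ) : ℝ := (-(gma1 σ μ q)) * (gma2 σ μ q - 1)
noncomputable def cB (σ μ q : ℝ) : ℝ := gma2 σ μ q * (1 - gma1 σ μ q)

lemma cA_pos (σ μ q : ℝ) (hσ : 0 < σ) (hq : 0 < q) (hqμ : μ < q) : 0 < cA σ μ q :=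
  mul_pos (by linarith [gma1_neg σ μ q hσ hq]) (by linarith [gma2_gt_one σ μ q hσ hq hqμ])

lemma cB_pos (σ μ q : ℝ) (hσ : 0 < σ) (hq : 0 < q) (hqμ : μ < q) : 0 < cB σ μ q :=
  mul_pos (gma2_pos σ μ q hσ hq hqμ) (by linarith [gma1_neg σ μ q hσ hq])

lemma cB_sub_cA (σ μ q : ℝ) : cB σ μ q - cA σ μ q = 2 * dlt σ μ q := by
  rw [cA, cB, gma1, gma2]; ring

lemma W_eq (σ μ q : ℝ) (hσ : 0 < σ) (hq : 0 < q) {x : ℝ} (hx : 0 ≤ x) :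
    W σ μ q x = (Real.exp (gma2 σ μ q * x) - Real.exp (gma1 σ μ q * x)) / (σ ^ 2 * dlt σ μ q) := by
  have hδ := dlt_pos σ μ q hσ hq
  have hσ2 : (0:ℝ) < σ ^ 2 := by positivity
  rw [W, if_pos hx, Real.sinh_eq, gma2, gma1]
  rw [show (gma σ μ + dlt σ μ q) * x = gma σ μ * x + dlt σ μ q * x by ring,
    show (gma σ μ - dlt σ μ q) * x = gma σ μ * x + -(dlt σ μ q * x) by ring,
    Real.exp_add, Real.exp_add]
  field_simp

lemma den_eq (σ μ q : ℝ) (hσ : 0 < σ) (hq : 0 < q) {x : ℝ} (hx : 0 ≤ x) :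
    q * W σ μ q x - Z σ μ q x =
      (cA σ μ q * Real.exp (gma2 σ μ q * x) - cB σ μ q * Real.exp (gma1 σ μ q * x))
        / (2 * dlt σ μ q) := by
  have hδ := dlt_pos σ μ q hσ hq
  have hσ2 : (0:ℝ) < σ ^ 2 := by positivity
  have h2 := dlt_sq σ μ q hσ hq
  rw [W, Z, if_pos hx, if_pos hx, Real.sinh_eq, Real.cosh_eq, cA, cB, gma1, gma2]
  set g := gma σ μ with hg
  set d := dlt σ μ q with hd
  have hqe : q = σ ^ 2 * (d ^ 2 - g ^ 2) / 2 := by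
    field_simp at h2 ⊢
    linarith
  rw [show (g + d) * x = g * x + d * x by ring,
    show (g - d) * x = g * x + -(d * x) by ring,
    Real.exp_add, Real.exp_add, Real.exp_neg]
  rw [hqe]
  have he : Real.exp (d * x) ≠ 0 := (Real.exp_pos _).ne'
  field_simp
  ring

lemma ratio_eq (σ μ q : ℝ) (hσ : 0 < σ) (hq : 0 < q) (hqμ : μ < q) :
    (1 - 1 / gma1 σ μ q) / (1 - 1 / gma2 σ μ q) = cB σ μ q / cA σ μ q := by
  have h1 := gma1_neg σ μ q hσ hq
  have h2 := gma2_gt_one σ μ q hσ hq hqμ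
  have h1' : gma1 σ μ q ≠ 0 := ne_of_lt h1
  have h2' : gma2 σ μ q ≠ 0 := by linarith
  have h3 : gma2 σ μ q - 1 ≠ 0 := by linarith
  have hA : cA σ μ q ≠ 0 := ne_of_gt (cA_pos σ μ q hσ hq hqμ)
  have h4 : 1 - 1 / gma2 σ μ q ≠ 0 := by
    have : 1 / gma2 σ μ q < 1 := by
      rw [div_lt_one (by linarith)]; linarith
    linarith
  rw [cA, cB]
  field_simp
  ring
lemma one_lt_ratio (σ μ q : ℝ) (hσ : 0 < σ) (hq : 0 < q) (hqμ : μ < q) :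
    1 < cB σ μ q / cA σ μ q := by
  have hA := cA_pos σ μ q hσ hq hqμ
  rw [one_lt_div hA]
  have := cB_sub_cA σ μ q
  have := dlt_pos σ μ q hσ hq
  linarith

lemma kstar_exp (σ μ q : ℝ) (hσ : 0 < σ) (hq : 0 < q) (hqμ : μ < q) :
    Real.exp ((gma2 σ μ q - gma1 σ μ q) * kstar σ μ q) = cB σ μ q / cA σ μ q := by
  have hδ := dlt_pos σ μ q hσ hq
  have hne : gma2 σ μ q - gma1 σ μ q ≠ 0 := by
    rw [gma2, gma1]; intro h; nlinarith
  rw [kstar, ratio_eq σ μ q hσ hq hqμ, show (gma2 σ μ q - gma1 σ μ q) *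
    ((gma2 σ μ q - gma1 σ μ q)⁻¹ * Real.log (cB σ μ q / cA σ μ q)) =
      Real.log (cB σ μ q / cA σ μ q) by field_simp]
  exact Real.exp_log (lt_trans one_pos (one_lt_ratio σ μ q hσ hq hqμ))

lemma kstar_pos (σ μ q : ℝ) (hσ : 0 < σ) (hq : 0 < q) (hqμ : μ < q) : 0 < kstar σ μ q := by
  have hδ := dlt_pos σ μ q hσ hq
  have hgap : 0 < gma2 σ μ q - gma1 σ μ q := by rw [gma2, gma1]; linarith
  rw [kstar, ratio_eq σ μ q hσ hq hqμ]
  exact mul_pos (inv_pos.mpr hgap) (Real.log_pos (one_lt_ratio σ μ q hσ hq hqμ))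

lemma cA_exp_kstar (σ μ q : ℝ) (hσ : 0 < σ) (hq : 0 < q) (hqμ : μ < q) :
    cA σ μ q * Real.exp ((gma2 σ μ q - gma1 σ μ q) * kstar σ μ q) = cB σ μ q := by
  have hA : cA σ μ q ≠ 0 := ne_of_gt (cA_pos σ μ q hσ hq hqμ)
  rw [kstar_exp σ μ q hσ hq hqμ]
  field_simp

lemma g_neg (σ μ q : ℝ) (hσ : 0 < σ) (hq : 0 < q) (hqμ : μ < q) {x : ℝ}
    (hx : x < kstar σ μ q) :
    cA σ μ q * Real.exp (gma2 σ μ q * x) - cB σ μ q * Real.exp (gma1 σ μ q * x) < 0 := by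
  have hδ := dlt_pos σ μ q hσ hq
  have hgap : 0 < gma2 σ μ q - gma1 σ μ q := by rw [gma2, gma1]; linarith
  have hA := cA_pos σ μ q hσ hq hqμ
  have h1 : Real.exp (gma2 σ μ q * x)
      = Real.exp ((gma2 σ μ q - gma1 σ μ q) * x) * Real.exp (gma1 σ μ q * x) := by
    rw [← Real.exp_add]; ring_nf
  have h2 : cA σ μ q * Real.exp ((gma2 σ μ q - gma1 σ μ q) * x) < cB σ μ q := by
    calc cA σ μ q * Real.exp ((gma2 σ μ q - gma1 σ μ q) * x)
        < cA σ μ q * Real.exp ((gma2 σ μ q - gma1 σ μ q) * kstar σ μ q) := by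
          apply mul_lt_mul_of_pos_left _ hA
          exact Real.exp_lt_exp.mpr (mul_lt_mul_of_pos_left hx hgap)
      _ = cB σ μ q := cA_exp_kstar σ μ q hσ hq hqμ
  rw [h1, ← mul_assoc, sub_neg]
  exact mul_lt_mul_of_pos_right h2 (Real.exp_pos _)

lemma W_continuous (σ μ q : ℝ) : Continuous (W σ μ q) := by
  have : Continuous fun x : ℝ =>
      2 / (σ ^ 2 * dlt σ μ q) * Real.exp (gma σ μ * x) * Real.sinh (dlt σ μ q * x) := by
    fun_prop
  refine Continuous.if_le this continuous_const continuous_const continuous_id fun x hx => ?_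
  simp [← hx]

lemma Z_continuous (σ μ q : ℝ) : Continuous (Z σ μ q) := by
  have : Continuous fun x : ℝ =>
      Real.exp (gma σ μ * x) * Real.cosh (dlt σ μ q * x)
        - gma σ μ / dlt σ μ q * Real.exp (gma σ μ * x) * Real.sinh (dlt σ μ q * x) := by
    fun_prop
  refine Continuous.if_le this continuous_const continuous_const continuous_id fun x hx => ?_
  simp [← hx]

lemma W_pos (σ μ q : ℝ) (hσ : 0 < σ) (hq : 0 < q) {x : ℝ} (hx : 0 < x) : 0 < W σ μ q x := by
  have hδ := dlt_pos σ μ q hσ hq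
  rw [W, if_pos hx.le]
  have h1 : (0:ℝ) < 2 / (σ ^ 2 * dlt σ μ q) := by positivity
  exact mul_pos (mul_pos h1 (Real.exp_pos _)) (Real.sinh_pos_iff.mpr (by positivity))

lemma W_nonneg (σ μ q : ℝ) (hσ : 0 < σ) (hq : 0 < q) (x : ℝ) : 0 ≤ W σ μ q x := by
  rcases lt_or_ge 0 x with h | h
  · exact (W_pos σ μ q hσ hq h).le
  · rcases eq_or_lt_of_le h with h' | h'
    · subst h'; rw [W, if_pos le_rfl]; simp
    · rw [W, if_neg (not_le.mpr h')]

lemma den_neg (σ μ q : ℝ) (hσ : 0 < σ) (hq : 0 < q) (hqμ : μ < q) {x : ℝ}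
    (hx : x < kstar σ μ q) : q * W σ μ q x - Z σ μ q x < 0 := by
  have hδ := dlt_pos σ μ q hσ hq
  rcases le_or_gt 0 x with h | h
  · rw [den_eq σ μ q hσ hq h]
    exact div_neg_of_neg_of_pos (g_neg σ μ q hσ hq hqμ hx) (by positivity)
  · rw [W, Z, if_neg (not_le.mpr h), if_neg (not_le.mpr h)]
    linarith

lemma f_contOn (σ μ q : ℝ) (hσ : 0 < σ) (hq : 0 < q) (hqμ : μ < q) :
    ContinuousOn (fun η => q * W σ μ q η / (q * W σ μ q η - Z σ μ q η))
      (Set.Iio (kstar σ μ q)) := by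
  apply ContinuousOn.div
  · exact (continuous_const.mul (W_continuous σ μ q)).continuousOn
  · exact ((continuous_const.mul (W_continuous σ μ q)).sub (Z_continuous σ μ q)).continuousOn
  · exact fun x hx => ne_of_lt (den_neg σ μ q hσ hq hqμ hx)

lemma f_intble (σ μ q : ℝ) (hσ : 0 < σ) (hq : 0 < q) (hqμ : μ < q) {s : ℝ}
    (hs : s < kstar σ μ q) :
    IntervalIntegrable (fun η => q * W σ μ q η / (q * W σ μ q η - Z σ μ q η))
      MeasureTheory.volume 0 s := by
  apply ContinuousOn.intervalIntegrable
  apply (f_contOn σ μ q hσ hq hqμ).mono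
  intro x hx
  rw [Set.uIcc_eq_union] at hx
  rcases hx with hx | hx
  · exact lt_of_le_of_lt hx.2 hs
  · exact lt_of_le_of_lt hx.2 (kstar_pos σ μ q hσ hq hqμ)

lemma f_intble_on (σ μ q : ℝ) (hσ : 0 < σ) (hq : 0 < q) (hqμ : μ < q) {a s : ℝ}
    (ha : a ≤ s) (hs : s < kstar σ μ q) :
    IntervalIntegrable (fun η => q * W σ μ q η / (q * W σ μ q η - Z σ μ q η))
      MeasureTheory.volume a s := by
  apply ContinuousOn.intervalIntegrable
  apply (f_contOn σ μ q hσ hq hqμ).mono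
  intro x hx
  rw [Set.uIcc_eq_union] at hx
  rcases hx with hx | hx
  · exact lt_of_le_of_lt hx.2 hs
  · exact lt_of_le_of_lt hx.2 (lt_of_le_of_lt ha hs)

lemma H_hasDeriv (σ μ q ε : ℝ) (hσ : 0 < σ) (hq : 0 < q) (hqμ : μ < q) {s : ℝ}
    (hs : s < kstar σ μ q) :
    HasDerivAt (Hfun σ μ q ε) (q * W σ μ q s / (q * W σ μ q s - Z σ μ q s)) s := by
  have hc : ContinuousAt (fun η => q * W σ μ q η / (q * W σ μ q η - Z σ μ q η)) s :=
    (f_contOn σ μ q hσ hq hqμ).continuousAt (Iio_mem_nhds hs)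
  have h := intervalIntegral.integral_hasDerivAt_right
    (f_intble σ μ q hσ hq hqμ hs)
    ((f_contOn σ μ q hσ hq hqμ).stronglyMeasurableAtFilter isOpen_Iio _ hs)
    hc
  exact h.const_add ε

lemma gk_eq (σ μ q : ℝ) (hσ : 0 < σ) (hq : 0 < q) (hqμ : μ < q) :
    cA σ μ q * Real.exp (gma2 σ μ q * kstar σ μ q)
      = cB σ μ q * Real.exp (gma1 σ μ q * kstar σ μ q) := by
  have h := cA_exp_kstar σ μ q hσ hq hqμ
  have h2 : Real.exp (gma2 σ μ q * kstar σ μ q)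
      = Real.exp ((gma2 σ μ q - gma1 σ μ q) * kstar σ μ q)
        * Real.exp (gma1 σ μ q * kstar σ μ q) := by
    rw [← Real.exp_add]; ring_nf
  rw [h2, ← mul_assoc, h]

lemma den_lower (σ μ q : ℝ) (hσ : 0 < σ) (hq : 0 < q) (hqμ : μ < q) {η : ℝ}
    (hη0 : 0 ≤ η) (hηk : η ≤ kstar σ μ q) :
    -(q * W σ μ q η - Z σ μ q η) ≤
      ((cA σ μ q * gma2 σ μ q * Real.exp (gma2 σ μ q * kstar σ μ q)
        - cB σ μ q * gma1 σ μ q) / (2 * dlt σ μ q)) * (kstar σ μ q - η) := by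
  have hδ := dlt_pos σ μ q hσ hq
  have hA := cA_pos σ μ q hσ hq hqμ
  have hB := cB_pos σ μ q hσ hq hqμ
  have hγ1 := gma1_neg σ μ q hσ hq
  have hγ2 := gma2_pos σ μ q hσ hq hqμ
  have hgk := gk_eq σ μ q hσ hq hqμ
  rw [den_eq σ μ q hσ hq hη0, ← neg_div, div_mul_eq_mul_div,
    div_le_div_iff_of_pos_right (by positivity : (0:ℝ) < 2 * dlt σ μ q)]
  set k := kstar σ μ q with hk
  set g1 := gma1 σ μ q with hg1
  set g2 := gma2 σ μ q with hg2
  have hb1 : Real.exp (g2 * k) - Real.exp (g2 * η) ≤ g2 * Real.exp (g2 * k) * (k - η) := by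
    have h1 : Real.exp (g2 * η) = Real.exp (g2 * k) * Real.exp (g2 * η - g2 * k) := by
      rw [← Real.exp_add]; ring_nf
    have h2 := Real.add_one_le_exp (g2 * η - g2 * k)
    nlinarith [Real.exp_pos (g2 * k)]
  have hb2 : Real.exp (g1 * η) - Real.exp (g1 * k) ≤ (-g1) * (k - η) := by
    have h1 : Real.exp (g1 * k) = Real.exp (g1 * η) * Real.exp (g1 * k - g1 * η) := by
      rw [← Real.exp_add]; ring_nf
    have h2 := Real.add_one_le_exp (g1 * k - g1 * η)
    have h3 : Real.exp (g1 * η) ≤ 1 := Real.exp_le_one_iff.mpr (by nlinarith)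
    have h4 : 0 ≤ (-g1) * (k - η) := mul_nonneg (by linarith) (by linarith)
    nlinarith [mul_le_mul_of_nonneg_right h3 h4,
      mul_le_mul_of_nonneg_left h2 (Real.exp_pos (g1 * η)).le]
  nlinarith [mul_le_mul_of_nonneg_left hb1 hA.le, mul_le_mul_of_nonneg_left hb2 hB.le]

theorem stmt_10 (σ μ q ε : ℝ) (hσ : 0 < σ) (hq : 0 < q) (hqμ : μ < q) :
    (∀ s ∈ Set.Ioo (0 : ℝ) (kstar σ μ q),
      IntervalIntegrable (fun η => q * W σ μ q η / (q * W σ μ q η - Z σ μ q η))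
        MeasureTheory.volume 0 s) ∧
    ContDiffOn ℝ 1 (Hfun σ μ q ε) (Set.Ioo 0 (kstar σ μ q)) ∧
    StrictAntiOn (Hfun σ μ q ε) (Set.Ioo 0 (kstar σ μ q)) ∧
    Filter.Tendsto (Hfun σ μ q ε) (nhdsWithin 0 (Set.Ioi 0)) (nhds ε) ∧
    Filter.Tendsto (Hfun σ μ q ε) (nhdsWithin (kstar σ μ q) (Set.Iio (kstar σ μ q)))
      Filter.atBot ∧
    Set.BijOn (Hfun σ μ q ε) (Set.Ioo 0 (kstar σ μ q)) (Set.Iio ε) := by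
  have hk0 : 0 < kstar σ μ q := kstar_pos σ μ q hσ hq hqμ
  set k := kstar σ μ q with hkdef
  set f : ℝ → ℝ := fun η => q * W σ μ q η / (q * W σ μ q η - Z σ μ q η) with hfdef
  have hHd : ∀ s, s < k → HasDerivAt (Hfun σ μ q ε) (f s) s := fun s hs =>
    H_hasDeriv σ μ q ε hσ hq hqμ hs
  have hfneg : ∀ s ∈ Set.Ioo 0 k, f s < 0 := fun s hs =>
    div_neg_of_pos_of_neg (mul_pos hq (W_pos σ μ q hσ hq hs.1)) (den_neg σ μ q hσ hq hqμ hs.2)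
  have hfnonpos : ∀ u, u < k → f u ≤ 0 := by
    intro u hu
    have h1 : 0 ≤ q * W σ μ q u := mul_nonneg hq.le (W_nonneg σ μ q hσ hq u)
    have h2 := den_neg σ μ q hσ hq hqμ hu
    exact div_nonpos_iff.mpr (Or.inl ⟨h1, h2.le⟩)
  have hdiff : DifferentiableOn ℝ (Hfun σ μ q ε) (Set.Ioo 0 k) := fun s hs =>
    ((hHd s hs.2).differentiableAt).differentiableWithinAt
  have hderiv_eq : Set.EqOn (deriv (Hfun σ μ q ε)) f (Set.Ioo 0 k) := fun s hs =>
    (hHd s hs.2).deriv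
  -- continuity on Icc subsets
  have hHcont : ∀ x, x < k → ContinuousAt (Hfun σ μ q ε) x := fun x hx =>
    (hHd x hx).continuousAt
  -- ContDiffOn
  have hcd : ContDiffOn ℝ 1 (Hfun σ μ q ε) (Set.Ioo 0 k) := by
    rw [show (1 : WithTop ℕ∞) = 0 + 1 by rfl,
      contDiffOn_succ_iff_deriv_of_isOpen isOpen_Ioo]
    refine ⟨hdiff, ?_, ?_⟩
    · intro h; exact absurd h (by simp)
    · rw [contDiffOn_zero]
      exact ((f_contOn σ μ q hσ hq hqμ).mono Set.Ioo_subset_Iio_self).congr hderiv_eq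
  -- StrictAntiOn
  have hanti : StrictAntiOn (Hfun σ μ q ε) (Set.Ioo 0 k) := by
    apply strictAntiOn_of_deriv_neg (convex_Ioo 0 k) hdiff.continuousOn
    intro s hs
    rw [interior_Ioo] at hs
    rw [hderiv_eq hs]
    exact hfneg s hs
  -- limit at 0
  have hH0 : Hfun σ μ q ε 0 = ε := by
    rw [Hfun, intervalIntegral.integral_same, add_zero]
  have htend0 : Filter.Tendsto (Hfun σ μ q ε) (nhdsWithin 0 (Set.Ioi 0)) (nhds ε) := by
    have h := (hHcont 0 hk0).tendsto
    rw [hH0] at h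
    exact h.mono_left nhdsWithin_le_nhds
  -- limit at k
  have ha0 : 0 < k / 2 := by linarith
  have hak : k / 2 < k := by linarith
  have hc : 0 < q * W σ μ q (k / 2) := mul_pos hq (W_pos σ μ q hσ hq ha0)
  set c := q * W σ μ q (k / 2) with hcdef
  set L := (cA σ μ q * gma2 σ μ q * Real.exp (gma2 σ μ q * k) - cB σ μ q * gma1 σ μ q)
      / (2 * dlt σ μ q) with hLdef
  have hδ := dlt_pos σ μ q hσ hq
  have hL : 0 < L := by
    apply div_pos _ (by positivity)
    have h1 : 0 < cA σ μ q * gma2 σ μ q * Real.exp (gma2 σ μ q * k) :=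
      mul_pos (mul_pos (cA_pos σ μ q hσ hq hqμ) (gma2_pos σ μ q hσ hq hqμ)) (Real.exp_pos _)
    have h2 : cB σ μ q * gma1 σ μ q < 0 :=
      mul_neg_of_pos_of_neg (cB_pos σ μ q hσ hq hqμ) (gma1_neg σ μ q hσ hq)
    linarith
  have hWlow : ∀ s, k / 2 ≤ s → s ≤ k → c ≤ q * W σ μ q s := by
    intro s hs1 hs2
    rw [hcdef, W_eq σ μ q hσ hq ha0.le, W_eq σ μ q hσ hq (le_trans ha0.le hs1)]
    apply mul_le_mul_of_nonneg_left _ hq.le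
    rw [div_le_div_iff_of_pos_right (by positivity)]
    have e1 : Real.exp (gma2 σ μ q * (k / 2)) ≤ Real.exp (gma2 σ μ q * s) :=
      Real.exp_le_exp.mpr (mul_le_mul_of_nonneg_left hs1 (gma2_pos σ μ q hσ hq hqμ).le)
    have e2 : Real.exp (gma1 σ μ q * s) ≤ Real.exp (gma1 σ μ q * (k / 2)) :=
      Real.exp_le_exp.mpr (mul_le_mul_of_nonpos_left hs1 (gma1_neg σ μ q hσ hq).le)
    linarith
  have hfb : ∀ η, k / 2 ≤ η → η < k → f η ≤ -(c / (L * (k - η))) := by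
    intro η hη1 hη2
    have h0η : (0:ℝ) ≤ η := le_trans ha0.le hη1
    have hD := den_neg σ μ q hσ hq hqμ hη2
    have hDlow := den_lower σ μ q hσ hq hqμ h0η hη2.le
    have hDpos : 0 < -(q * W σ μ q η - Z σ μ q η) := neg_pos.mpr hD
    have h1 : c / (L * (k - η)) ≤ q * W σ μ q η / -(q * W σ μ q η - Z σ μ q η) :=
      div_le_div₀ (mul_nonneg hq.le (W_nonneg σ μ q hσ hq η)) (hWlow η hη1 hη2.le) hDpos hDlow
    have h2 : f η = -(q * W σ μ q η / -(q * W σ μ q η - Z σ μ q η)) := by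
      rw [hfdef]
      simp only [div_neg, neg_neg]
    rw [h2]
    exact neg_le_neg h1
  have hgcont : ∀ s, k / 2 ≤ s → s < k →
      IntervalIntegrable (fun η => -(c / (L * (k - η)))) MeasureTheory.volume (k / 2) s := by
    intro s hs1 hs2
    apply ContinuousOn.intervalIntegrable
    apply ContinuousOn.neg
    apply continuousOn_const.div
    · exact (continuous_const.mul (continuous_const.sub continuous_id)).continuousOn
    · intro x hx
      rw [Set.uIcc_of_le hs1] at hx
      have : 0 < k - x := by linarith [hx.2]
      positivity
  have heval : ∀ s, k / 2 ≤ s → s < k →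
      ∫ η in (k/2)..s, -(c / (L * (k - η)))
        = c / L * Real.log (k - s) - c / L * Real.log (k - k / 2) := by
    intro s hs1 hs2
    have hd : ∀ x ∈ Set.uIcc (k/2) s,
        HasDerivAt (fun u => c / L * Real.log (k - u)) (-(c / (L * (k - x)))) x := by
      intro x hx
      rw [Set.uIcc_of_le hs1] at hx
      have hkx : 0 < k - x := by linarith [hx.2]
      have h1 : HasDerivAt (fun u : ℝ => k - u) (-1) x := (hasDerivAt_id x).const_sub k
      have h2 := (h1.log (ne_of_gt hkx)).const_mul (c / L)
      refine h2.congr_deriv ?_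
      rw [div_mul_div_comm]
      ring
    rw [intervalIntegral.integral_eq_sub_of_hasDerivAt hd (hgcont s hs1 hs2)]
  have hcomp : ∀ s, k / 2 ≤ s → s < k → Hfun σ μ q ε s ≤ Hfun σ μ q ε (k/2)
      + c / L * (Real.log (k - s) - Real.log (k - k / 2)) := by
    intro s hs1 hs2
    have hint1 := f_intble σ μ q hσ hq hqμ hak
    have hint2 := f_intble_on σ μ q hσ hq hqμ hs1 hs2
    have hsplit := intervalIntegral.integral_add_adjacent_intervals hint1 hint2
    have hmono : (∫ η in (k/2)..s, f η) ≤ ∫ η in (k/2)..s, -(c / (L * (k - η))) := by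
      apply intervalIntegral.integral_mono_on hs1 hint2 (hgcont s hs1 hs2)
      intro x hx
      exact hfb x hx.1 (lt_of_le_of_lt hx.2 hs2)
    rw [heval s hs1 hs2] at hmono
    have hexp : Hfun σ μ q ε s = Hfun σ μ q ε (k/2) + ∫ η in (k/2)..s, f η := by
      rw [Hfun, Hfun]
      rw [← hsplit]
      ring
    rw [hexp]
    linarith
  have hlog : Filter.Tendsto (fun s => Real.log (k - s)) (nhdsWithin k (Set.Iio k))
      Filter.atBot := by
    apply Real.tendsto_log_nhdsGT_zero.comp
    have h1 : Filter.Tendsto (fun s : ℝ => k - s) (nhds k) (nhds 0) := by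
      simpa using (tendsto_id : Filter.Tendsto id (nhds k) (nhds k)).const_sub k
    apply tendsto_nhdsWithin_of_tendsto_nhds_of_eventually_within _
      (h1.mono_left nhdsWithin_le_nhds)
    filter_upwards [self_mem_nhdsWithin] with s hs
    exact sub_pos.mpr (Set.mem_Iio.mp hs)
  have htendk : Filter.Tendsto (Hfun σ μ q ε) (nhdsWithin k (Set.Iio k)) Filter.atBot := by
    have hb1 : Filter.Tendsto (fun s => c / L * (Real.log (k - s) - Real.log (k - k / 2)))
        (nhdsWithin k (Set.Iio k)) Filter.atBot :=
      (tendsto_atBot_add_const_right _ _ hlog).const_mul_atBot (div_pos hc hL)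
    have hb2 := tendsto_atBot_add_const_left _ (Hfun σ μ q ε (k/2)) hb1
    apply tendsto_atBot_mono' _ _ hb2
    filter_upwards [Ioo_mem_nhdsLT_of_mem (Set.mem_Ioc.mpr ⟨hak, le_refl k⟩)] with s hs
    exact hcomp s hs.1.le hs.2
  -- MapsTo
  have hmaps : Set.MapsTo (Hfun σ μ q ε) (Set.Ioo 0 k) (Set.Iio ε) := by
    intro s hs
    have hhalf : s / 2 ∈ Set.Ioo 0 k := ⟨by linarith [hs.1], by linarith [hs.1, hs.2]⟩
    have h2 : Hfun σ μ q ε s < Hfun σ μ q ε (s/2) := hanti hhalf hs (by linarith [hs.1])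
    have h3 : Hfun σ μ q ε (s/2) ≤ ε := by
      have hnn : (0:ℝ) ≤ ∫ η in (0:ℝ)..(s/2), -(f η) := by
        apply intervalIntegral.integral_nonneg (by linarith [hs.1] : (0:ℝ) ≤ s/2)
        intro u hu
        have : u < k := lt_of_le_of_lt hu.2 hhalf.2
        linarith [hfnonpos u this]
      rw [intervalIntegral.integral_neg] at hnn
      rw [Hfun]
      have : (∫ η in (0:ℝ)..(s/2), f η) ≤ 0 := by linarith
      linarith
    exact Set.mem_Iio.mpr (lt_of_lt_of_le h2 h3)
  -- SurjOn
  have hsurj : Set.SurjOn (Hfun σ μ q ε) (Set.Ioo 0 k) (Set.Iio ε) := by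
    intro y hy
    have hev1 : ∀ᶠ s in nhdsWithin 0 (Set.Ioi 0), y < Hfun σ μ q ε s :=
      htend0.eventually (eventually_gt_nhds hy)
    have hev2 : ∀ᶠ s in nhdsWithin (0:ℝ) (Set.Ioi 0), s < k :=
      Filter.Eventually.filter_mono nhdsWithin_le_nhds (eventually_lt_nhds hk0)
    have hev3 : ∀ᶠ s in nhdsWithin (0:ℝ) (Set.Ioi 0), 0 < s := self_mem_nhdsWithin
    obtain ⟨A, hyA, hAk, hA0⟩ := (hev1.and (hev2.and hev3)).exists
    have hev4 : ∀ᶠ s in nhdsWithin k (Set.Iio k), Hfun σ μ q ε s < y :=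
      htendk.eventually (eventually_lt_atBot y)
    have hev5 : ∀ᶠ s in nhdsWithin k (Set.Iio k), A < s :=
      Filter.Eventually.filter_mono nhdsWithin_le_nhds (eventually_gt_nhds hAk)
    have hev6 : ∀ᶠ s in nhdsWithin k (Set.Iio k), s < k := self_mem_nhdsWithin
    obtain ⟨B, hBy, hAB, hBk⟩ := (hev4.and (hev5.and hev6)).exists
    have hcont : ContinuousOn (Hfun σ μ q ε) (Set.Icc A B) := fun x hx =>
      (hHcont x (lt_of_le_of_lt hx.2 hBk)).continuousWithinAt
    have hsub := intermediate_value_Icc' hAB.le hcont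
    obtain ⟨x, hx, hxy⟩ := hsub ⟨hBy.le, hyA.le⟩
    exact ⟨x, ⟨lt_of_lt_of_le hA0 hx.1, lt_of_le_of_lt hx.2 hBk⟩, hxy⟩
  exact ⟨fun s hs => f_intble σ μ q hσ hq hqμ hs.2, hcd, hanti, htend0, htendk,
    hmaps, hanti.injOn, hsurj⟩
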